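/- Let $k$ be a field of characteristic $\neq 2$ and let $q$ be an anisotropic quadratic form over $k$ representing $1$, with $q \simeq \langle 1 \rangle \perp q'$. Then the quadratic form $\varphi_1 = \langle x_2 + 1, -x_2 \rangle \perp \langle 1, -x_2 \rangle \otimes q'$ is anisotropic over the Laurent series field $k((x_2))$. -/

import Mathlib

/-- A diagonal quadratic form (given by its diagonal entries `d`) is anisotropic. -/
def Anisotropic {F : Type*} [Field F] {ι : Type*} [Fintype ι] (d : ι → F) : Prop :=
  ∀ w : ι → F, ∑ i, d i * w i ^ 2 = 0 → w = 0

section Helpers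

variable {k : Type*} [Field k]

lemma hahn_coeff_mul_lt {x y : HahnSeries ℤ k} {m m' : ℤ}
    (hx : ∀ j < m, x.coeff j = 0) (hy : ∀ j < m', y.coeff j = 0)
    {a : ℤ} (ha : a < m + m') : (x * y).coeff a = 0 := by
  rw [HahnSeries.coeff_mul]
  apply Finset.sum_eq_zero
  intro ij hij
  rw [Finset.mem_addAntidiagonal] at hij
  obtain ⟨h1, h2, h3⟩ := hij
  rw [HahnSeries.mem_support] at h1 h2
  have h1' : ¬ ij.1 < m := fun h => h1 (hx _ h)
  have h2' : ¬ ij.2 < m' := fun h => h2 (hy _ h)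
  exfalso; omega

lemma hahn_coeff_mul_eq {x y : HahnSeries ℤ k} {m m' : ℤ}
    (hx : ∀ j < m, x.coeff j = 0) (hy : ∀ j < m', y.coeff j = 0) :
    (x * y).coeff (m + m') = x.coeff m * y.coeff m' := by
  rw [HahnSeries.coeff_mul]
  have hsub : Finset.antidiagonal x.isPWO_support y.isPWO_support (m + m')
      ⊆ {((m : ℤ), m')} := by
    intro ij hij
    rw [Finset.mem_addAntidiagonal] at hij
    obtain ⟨h1, h2, h3⟩ := hij
    rw [HahnSeries.mem_support] at h1 h2
    have h1' : ¬ ij.1 < m := fun h => h1 (hx _ h)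
    have h2' : ¬ ij.2 < m' := fun h => h2 (hy _ h)
    simp only [Finset.mem_singleton]
    have : ij.1 = m ∧ ij.2 = m' := by omega
    exact Prod.ext this.1 this.2
  rw [Finset.sum_subset hsub, Finset.sum_singleton]
  intro ij hij hns
  rw [Finset.mem_singleton] at hij
  subst hij
  rw [Finset.mem_addAntidiagonal] at hns
  by_cases hxm : x.coeff m = 0
  · rw [hxm, zero_mul]
  by_cases hym : y.coeff m' = 0
  · rw [hym, mul_zero]
  · exact absurd ⟨(HahnSeries.mem_support _ _).mpr hxm, (HahnSeries.mem_support _ _).mpr hym, rfl⟩ hns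

lemma hahn_X_mul_coeff (z : LaurentSeries k) (c : ℤ) :
    ((HahnSeries.single (1 : ℤ) (1 : k)) * z).coeff c = z.coeff (c - 1) := by
  rw [show c = (c - 1) + 1 by ring, HahnSeries.coeff_single_mul_add, one_mul]
  ring_nf

lemma hahn_C_mul_coeff (r : k) (z : LaurentSeries k) (c : ℤ) :
    (HahnSeries.C r * z).coeff c = r * z.coeff c := by
  rw [HahnSeries.C_mul_eq_smul, HahnSeries.coeff_smul, smul_eq_mul]

end Helpers

/-- let `q ≃ ⟨1⟩ ⊥ q'` be anisotropic over `k` (char ≠ 2).  Then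
`φ₁ = ⟨x₂ + 1, -x₂⟩ ⊥ ⟨1, -x₂⟩ ⊗ q'` is anisotropic over `k((x₂))`.  Here `x₂` is the
Laurent series variable. -/
theorem phi_one_anisotropic_over_laurent_series
    {k : Type*} [Field k] (hk : (2 : k) ≠ 0) {n : ℕ} (q' : Fin n → k)
    (hq : Anisotropic (Fin.cons 1 q' : Fin (n + 1) → k)) :
    Anisotropic (Sum.elim
      (![(HahnSeries.single (1 : ℤ) (1 : k) : LaurentSeries k) + 1,
         -(HahnSeries.single (1 : ℤ) (1 : k) : LaurentSeries k)])
      (fun p : Fin 2 × Fin n =>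
        ![(1 : LaurentSeries k),
          -(HahnSeries.single (1 : ℤ) (1 : k) : LaurentSeries k)] p.1 *
          HahnSeries.C (q' p.2))) := by
  classical
  intro w hsum
  by_contra hw
  set X : LaurentSeries k := HahnSeries.single (1 : ℤ) (1 : k) with hX
  -- there is a nonzero component
  have hex : ∃ i, w i ≠ 0 := by
    by_contra h
    push_neg at h
    exact hw (funext h)
  set s : Finset (Fin 2 ⊕ Fin 2 × Fin n) := Finset.univ.filter (fun i => w i ≠ 0) with hs
  have hsmem : ∀ i, w i ≠ 0 → i ∈ s := fun i hi =>
    Finset.mem_filter.mpr ⟨Finset.mem_univ i, hi⟩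
  have hsne : s.Nonempty := by
    obtain ⟨i, hi⟩ := hex
    exact ⟨i, hsmem i hi⟩
  set m : ℤ := s.inf' hsne (fun i => (w i).order) with hm
  have hF1 : ∀ i, ∀ j < m, (w i).coeff j = 0 := by
    intro i j hj
    by_cases hi : w i = 0
    · simp [hi]
    · exact HahnSeries.coeff_eq_zero_of_lt_order
        (lt_of_lt_of_le hj (Finset.inf'_le _ (hsmem i hi)))
  obtain ⟨i0, hi0s, hi0⟩ := Finset.exists_mem_eq_inf' hsne (fun i => (w i).order)
  have hi0ne : w i0 ≠ 0 := (Finset.mem_filter.mp hi0s).2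
  have hi0c : (w i0).coeff m ≠ 0 := by
    rw [hm, hi0]
    exact HahnSeries.coeff_order_eq_zero.not.2 hi0ne
  -- coefficient extraction
  have hcoeff : ∀ c : ℤ, ∑ i, ((Sum.elim
      (![X + 1, -X])
      (fun p : Fin 2 × Fin n => ![(1 : LaurentSeries k), -X] p.1 * HahnSeries.C (q' p.2)))
      i * w i ^ 2).coeff c = 0 := by
    intro c
    have h := congrArg (HahnSeries.coeff.addMonoidHom (Γ := ℤ) (R := k) c) hsum
    rw [map_sum, map_zero] at h
    simpa using h
  -- square coefficients
  have sqlt : ∀ i, ∀ c < m + m, ((w i) ^ 2).coeff c = 0 := by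
    intro i c hc
    rw [sq]
    exact hahn_coeff_mul_lt (hF1 i) (hF1 i) hc
  have sqeq : ∀ i, ((w i) ^ 2).coeff (m + m) = ((w i).coeff m) ^ 2 := by
    intro i
    rw [sq, hahn_coeff_mul_eq (hF1 i) (hF1 i), sq]
  -- STEP A : coefficient at 2m
  set a : Fin (n + 1) → k :=
    Fin.cons ((w (Sum.inl 0)).coeff m) (fun i => (w (Sum.inr (0, i))).coeff m) with ha
  have hAsum : ∑ i, (Fin.cons 1 q' : Fin (n + 1) → k) i * a i ^ 2 = 0 := by
    have e0 : ((X + 1) * w (Sum.inl 0) ^ 2).coeff (m + m)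
        = ((w (Sum.inl 0)).coeff m) ^ 2 := by
      rw [add_mul, one_mul, HahnSeries.coeff_add, hahn_X_mul_coeff,
        sqlt _ _ (by omega), zero_add, sqeq]
    have e1 : (-X * w (Sum.inl 1) ^ 2).coeff (m + m) = 0 := by
      rw [show -X * w (Sum.inl 1) ^ 2 = -(X * w (Sum.inl 1) ^ 2) by ring,
        HahnSeries.coeff_neg, hahn_X_mul_coeff, sqlt _ _ (by omega), neg_zero]
    have e2 : ∀ i : Fin n, ((1 : LaurentSeries k) * HahnSeries.C (q' i)
        * w (Sum.inr (0, i)) ^ 2).coeff (m + m)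
        = q' i * ((w (Sum.inr (0, i))).coeff m) ^ 2 := fun i => by
      rw [one_mul, hahn_C_mul_coeff, sqeq]
    have e3 : ∀ i : Fin n, (-X * HahnSeries.C (q' i)
        * w (Sum.inr (1, i)) ^ 2).coeff (m + m) = 0 := fun i => by
      rw [show -X * HahnSeries.C (q' i) * w (Sum.inr (1, i)) ^ 2
          = -(X * (HahnSeries.C (q' i) * w (Sum.inr (1, i)) ^ 2)) by ring,
        HahnSeries.coeff_neg, hahn_X_mul_coeff, hahn_C_mul_coeff,
        sqlt _ _ (by omega), mul_zero, neg_zero]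
    have h := hcoeff (m + m)
    rw [Fintype.sum_sum_type, Fin.sum_univ_two, Fintype.sum_prod_type, Fin.sum_univ_two] at h
    simp only [Sum.elim_inl, Sum.elim_inr, Matrix.cons_val_zero, Matrix.cons_val_one,
      Matrix.head_cons, e0, e1, e2, e3, Finset.sum_const_zero, add_zero, zero_add] at h
    rw [Fin.sum_univ_succ]
    simp only [Fin.cons_zero, Fin.cons_succ, ha, one_mul]
    exact h
  have haz := hq a hAsum
  have ha0 : (w (Sum.inl 0)).coeff m = 0 := by
    have := congrFun haz 0
    simpa [ha] using this
  have ha1 : ∀ i, (w (Sum.inr (0, i))).coeff m = 0 := by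
    intro i
    have := congrFun haz i.succ
    simpa [ha] using this
  -- even components now vanish below m+1
  have hF1' : ∀ i : Fin 2 ⊕ Fin 2 × Fin n,
      (w i).coeff m = 0 → ∀ j < m + 1, (w i).coeff j = 0 := by
    intro i h0 j hj
    rcases lt_or_eq_of_le (Int.lt_add_one_iff.mp hj) with h | h
    · exact hF1 i j h
    · rw [h]; exact h0
  have sqlt' : ∀ i : Fin 2 ⊕ Fin 2 × Fin n, (w i).coeff m = 0 →
      ((w i) ^ 2).coeff (m + m + 1) = 0 := by
    intro i h0
    rw [sq]
    exact hahn_coeff_mul_lt (hF1' i h0) (hF1' i h0) (by omega)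
  -- STEP B : coefficient at 2m+1
  set b : Fin (n + 1) → k :=
    Fin.cons ((w (Sum.inl 1)).coeff m) (fun i => (w (Sum.inr (1, i))).coeff m) with hb
  have hBsum : ∑ i, (Fin.cons 1 q' : Fin (n + 1) → k) i * b i ^ 2 = 0 := by
    have e0 : ((X + 1) * w (Sum.inl 0) ^ 2).coeff (m + m + 1) = 0 := by
      rw [add_mul, one_mul, HahnSeries.coeff_add, hahn_X_mul_coeff,
        show m + m + 1 - 1 = m + m by ring, sqeq, ha0, sqlt' _ ha0]
      ring
    have e1 : (-X * w (Sum.inl 1) ^ 2).coeff (m + m + 1)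
        = -(((w (Sum.inl 1)).coeff m) ^ 2) := by
      rw [show -X * w (Sum.inl 1) ^ 2 = -(X * w (Sum.inl 1) ^ 2) by ring,
        HahnSeries.coeff_neg, hahn_X_mul_coeff,
        show m + m + 1 - 1 = m + m by ring, sqeq]
    have e2 : ∀ i : Fin n, ((1 : LaurentSeries k) * HahnSeries.C (q' i)
        * w (Sum.inr (0, i)) ^ 2).coeff (m + m + 1) = 0 := fun i => by
      rw [one_mul, hahn_C_mul_coeff, sqlt' _ (ha1 i), mul_zero]
    have e3 : ∀ i : Fin n, (-X * HahnSeries.C (q' i)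
        * w (Sum.inr (1, i)) ^ 2).coeff (m + m + 1)
        = -(q' i * ((w (Sum.inr (1, i))).coeff m) ^ 2) := fun i => by
      rw [show -X * HahnSeries.C (q' i) * w (Sum.inr (1, i)) ^ 2
          = -(X * (HahnSeries.C (q' i) * w (Sum.inr (1, i)) ^ 2)) by ring,
        HahnSeries.coeff_neg, hahn_X_mul_coeff,
        show m + m + 1 - 1 = m + m by ring, hahn_C_mul_coeff, sqeq]
    have h := hcoeff (m + m + 1)
    rw [Fintype.sum_sum_type, Fin.sum_univ_two, Fintype.sum_prod_type, Fin.sum_univ_two] at h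
    simp only [Sum.elim_inl, Sum.elim_inr, Matrix.cons_val_zero, Matrix.cons_val_one,
      Matrix.head_cons, e0, e1, e2, e3, Finset.sum_const_zero, add_zero, zero_add] at h
    rw [Finset.sum_neg_distrib] at h
    rw [Fin.sum_univ_succ]
    simp only [Fin.cons_zero, Fin.cons_succ, hb, one_mul]
    linear_combination -h
  have hbz := hq b hBsum
  have hb0 : (w (Sum.inl 1)).coeff m = 0 := by
    have := congrFun hbz 0
    simpa [hb] using this
  have hb1 : ∀ i, (w (Sum.inr (1, i))).coeff m = 0 := by
    intro i
    have := congrFun hbz i.succ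
    simpa [hb] using this
  -- contradiction
  rcases i0 with j | ⟨j, i⟩
  · fin_cases j
    · exact hi0c ha0
    · exact hi0c hb0
  · fin_cases j
    · exact hi0c (ha1 i)
    · exact hi0c (hb1 i)
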